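/- Composition of three reflections in concurrent interior lines yields an interior line: if rays OA, OB, OC emanate from O with OB strictly between OA and OC, and d is the line through O such that the composition (reflection in OC) ∘ (reflection in OB) ∘ (reflection in OA) equals reflection in d, then one of the two rays of d from O lies strictly between rays OA and OC. -/

import Mathlib

open EuclideanGeometry

/-- The reflection of the Euclidean plane in the line through two points. -/
noncomputable def lineReflection (P Q : EuclideanSpace ℝ (Fin 2)) :
    EuclideanSpace ℝ (Fin 2) ≃ᵃⁱ[ℝ] EuclideanSpace ℝ (Fin 2) :=
  haveI : Nonempty (affineSpan ℝ ({P, Q} : Set (EuclideanSpace ℝ (Fin 2)))) :=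
    ⟨⟨P, subset_affineSpan ℝ _ (by simp)⟩⟩
  EuclideanGeometry.reflection (affineSpan ℝ ({P, Q} : Set (EuclideanSpace ℝ (Fin 2))))

lemma lineReflection_apply' (O P x : EuclideanSpace ℝ (Fin 2)) (hP : P ≠ O) :
    lineReflection O P x
      = (2 * ((inner ℝ (x - O) (P - O) : ℝ) / (inner ℝ (P - O) (P - O) : ℝ))) • (P - O) - (x - O) + O := by
  set v : EuclideanSpace ℝ (Fin 2) := P - O with hv_def
  have hv : v ≠ 0 := sub_ne_zero.mpr hP
  set s := affineSpan ℝ ({O, P} : Set (EuclideanSpace ℝ (Fin 2))) with hs_def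
  haveI : Nonempty s := ⟨⟨O, subset_affineSpan ℝ _ (by simp)⟩⟩
  have hdir : s.direction = ℝ ∙ v := by
    rw [hs_def, direction_affineSpan, vectorSpan_pair_rev]
    rfl
  set t : ℝ := (inner ℝ (x - O) v : ℝ) / (inner ℝ v v : ℝ) with ht_def
  have hm : t • v + O ∈ s := by
    have h1 := AffineMap.lineMap_mem_affineSpan_pair t O P
    rwa [AffineMap.lineMap_apply, vsub_eq_sub, vadd_eq_add] at h1
  have hperp : x - (t • v + O) ∈ s.directionᗮ := by
    rw [hdir, Submodule.mem_orthogonal_singleton_iff_inner_right]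
    have hvv : (inner ℝ v v : ℝ) ≠ 0 := inner_self_ne_zero.mpr hv
    have : (inner ℝ v (x - (t • v + O)) : ℝ)
        = inner ℝ v (x - O) - t * inner ℝ v v := by
      rw [show x - (t • v + O) = (x - O) - t • v by abel]
      rw [inner_sub_right, real_inner_smul_right]
    rw [this, ht_def, real_inner_comm v (x - O), div_mul_cancel₀ _ hvv, sub_self]
  have hproj : (orthogonalProjection s x : EuclideanSpace ℝ (Fin 2)) = t • v + O := by
    have h2 := orthogonalProjection_vadd_eq_self hm hperp
    rw [vadd_eq_add, sub_add_cancel] at h2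
    rw [h2]
  show (EuclideanGeometry.reflection s) x = _
  rw [EuclideanGeometry.reflection_apply', hproj, vsub_eq_sub, vadd_eq_add, ht_def]
  rw [real_inner_comm v (x - O)] -- maybe not needed
  module

lemma lineReflection_coord (O P x : EuclideanSpace ℝ (Fin 2)) (hP : P ≠ O) (i : Fin 2) :
    ((P 0 - O 0)^2 + (P 1 - O 1)^2) * (lineReflection O P x i - O i)
      = (2 * ((x 0 - O 0) * (P 0 - O 0) + (x 1 - O 1) * (P 1 - O 1))) * (P i - O i)
        - ((P 0 - O 0)^2 + (P 1 - O 1)^2) * (x i - O i) := by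
  have hv : P - O ≠ 0 := sub_ne_zero.mpr hP
  have hq' : (inner ℝ (P - O) (P - O) : ℝ) ≠ 0 := inner_self_ne_zero.mpr hv
  have hinner : ∀ (a b : EuclideanSpace ℝ (Fin 2)), (inner ℝ a b : ℝ) = a 0 * b 0 + a 1 * b 1 := by
    intro a b
    simp [PiLp.inner_apply, RCLike.inner_apply, Fin.sum_univ_two, mul_comm]
  have hq : (inner ℝ (P - O) (P - O) : ℝ) = (P 0 - O 0)^2 + (P 1 - O 1)^2 := by
    rw [hinner]; simp only [PiLp.sub_apply]; ring
  have hn : (inner ℝ (x - O) (P - O) : ℝ)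
      = (x 0 - O 0) * (P 0 - O 0) + (x 1 - O 1) * (P 1 - O 1) := by
    rw [hinner]; simp only [PiLp.sub_apply]
  have happ : lineReflection O P x i - O i
      = 2 * ((inner ℝ (x - O) (P - O) : ℝ) / (inner ℝ (P - O) (P - O) : ℝ)) * (P i - O i)
        - (x i - O i) := by
    rw [lineReflection_apply' O P x hP]
    simp only [PiLp.add_apply, PiLp.sub_apply, PiLp.smul_apply, smul_eq_mul]
    ring
  have key : ∀ (q n vi xi : ℝ), q ≠ 0 → q * (2 * (n / q) * vi - xi) = 2 * n * vi - q * xi := by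
    intro q n vi xi hq0; field_simp
  rw [happ, ← hq, ← hn, key _ _ _ _ hq', hn, hq]

set_option maxHeartbeats 2000000 in

lemma main_algebra (a0 a1 b0 b1 c0 c1 w0 w1 y0 y1 z0 z1 p q : ℝ)
    (hp : 0 < p) (hq : 0 < q)
    (hb0 : b0 = p * a0 + q * c0) (hb1 : b1 = p * a1 + q * c1)
    (hQa : 0 < a0^2 + a1^2) (hQb : 0 < b0^2 + b1^2) (hQc : 0 < c0^2 + c1^2)
    (hQw : 0 < w0^2 + w1^2)
    (hΔ : a0 * c1 - a1 * c0 ≠ 0)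
    (E1 : (a0^2 + a1^2) * y0 = 2 * (w0 * a0 + w1 * a1) * a0 - (a0^2 + a1^2) * w0)
    (E2 : (a0^2 + a1^2) * y1 = 2 * (w0 * a0 + w1 * a1) * a1 - (a0^2 + a1^2) * w1)
    (E3 : (b0^2 + b1^2) * z0 = 2 * (y0 * b0 + y1 * b1) * b0 - (b0^2 + b1^2) * y0)
    (E4 : (b0^2 + b1^2) * z1 = 2 * (y0 * b0 + y1 * b1) * b1 - (b0^2 + b1^2) * y1)
    (E5 : (c0^2 + c1^2) * w0 = 2 * (z0 * c0 + z1 * c1) * c0 - (c0^2 + c1^2) * z0)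
    (E6 : (c0^2 + c1^2) * w1 = 2 * (z0 * c0 + z1 * c1) * c1 - (c0^2 + c1^2) * z1) :
    ∃ s α β : ℝ, 0 < α ∧ 0 < β ∧ α + β = 1 ∧
      α * a0 + β * c0 = s * w0 ∧ α * a1 + β * c1 = s * w1 := by
  have F1 : (a0^2+a1^2) * ((b0^2+b1^2) * z0)
      = ((b0^2 - b1^2)*(a0^2 - a1^2) + 4*a0*a1*b0*b1) * w0
        - (2*b0*b1*(a0^2 - a1^2) - 2*a0*a1*(b0^2 - b1^2)) * w1 := by
    linear_combination (a0^2+a1^2) * E3 + (2*b0^2 - (b0^2+b1^2)) * E1 + (2*b0*b1) * E2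
  have F2 : (a0^2+a1^2) * ((b0^2+b1^2) * z1)
      = (2*b0*b1*(a0^2 - a1^2) - 2*a0*a1*(b0^2 - b1^2)) * w0
        + ((b0^2 - b1^2)*(a0^2 - a1^2) + 4*a0*a1*b0*b1) * w1 := by
    linear_combination (a0^2+a1^2) * E4 + (2*b0*b1) * E1 + (2*b1^2 - (b0^2+b1^2)) * E2
  have W0 : (a0^2+a1^2)*(b0^2+b1^2)*(c0^2+c1^2)*w0
      = (((a0*c0 - a1*c1)*b0 + (a0*c1 + a1*c0)*b1)^2
          - ((a0*c1 + a1*c0)*b0 - (a0*c0 - a1*c1)*b1)^2) * w0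
        + 2*((a0*c0 - a1*c1)*b0 + (a0*c1 + a1*c0)*b1)
            *((a0*c1 + a1*c0)*b0 - (a0*c0 - a1*c1)*b1) * w1 := by
    linear_combination (a0^2+a1^2)*(b0^2+b1^2) * E5 + (2*c0^2 - (c0^2+c1^2)) * F1
      + (2*c0*c1) * F2
  have W1 : (a0^2+a1^2)*(b0^2+b1^2)*(c0^2+c1^2)*w1
      = 2*((a0*c0 - a1*c1)*b0 + (a0*c1 + a1*c0)*b1)
          *((a0*c1 + a1*c0)*b0 - (a0*c0 - a1*c1)*b1) * w0
        - (((a0*c0 - a1*c1)*b0 + (a0*c1 + a1*c0)*b1)^2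
            - ((a0*c1 + a1*c0)*b0 - (a0*c0 - a1*c1)*b1)^2) * w1 := by
    linear_combination (a0^2+a1^2)*(b0^2+b1^2) * E6 + (2*c0*c1) * F1
      + (2*c1^2 - (c0^2+c1^2)) * F2
  obtain ⟨k0, hk0⟩ : ∃ x : ℝ, x = (a0*c0 - a1*c1)*b0 + (a0*c1 + a1*c0)*b1 := ⟨_, rfl⟩
  obtain ⟨k1, hk1⟩ : ∃ x : ℝ, x = (a0*c1 + a1*c0)*b0 - (a0*c0 - a1*c1)*b1 := ⟨_, rfl⟩
  have W0' : (a0^2+a1^2)*(b0^2+b1^2)*(c0^2+c1^2)*w0 = (k0^2 - k1^2)*w0 + 2*k0*k1*w1 := by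
    rw [hk0, hk1]; exact W0
  have W1' : (a0^2+a1^2)*(b0^2+b1^2)*(c0^2+c1^2)*w1 = 2*k0*k1*w0 - (k0^2 - k1^2)*w1 := by
    rw [hk0, hk1]; exact W1
  have hKQ : k0^2 + k1^2 = (a0^2+a1^2)*(b0^2+b1^2)*(c0^2+c1^2) := by rw [hk0, hk1]; ring
  have hKpos : 0 < k0^2 + k1^2 := by
    rw [hKQ]; exact mul_pos (mul_pos hQa hQb) hQc
  have hX : (2*(k0^2+k1^2)) * (k1*w0 - k0*w1) = 0 := by
    linear_combination k1 * W0' - k0 * W1' + (k1*w0 - k0*w1) * hKQ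
  have hak : a0*k1 - a1*k0 = (a0^2+a1^2) * (c1*b0 - c0*b1) := by rw [hk0, hk1]; ring
  have hck : c1*k0 - c0*k1 = (c0^2+c1^2) * (a0*b1 - a1*b0) := by rw [hk0, hk1]; ring
  have hb' : c1*b0 - c0*b1 = p*(a0*c1 - a1*c0) := by rw [hb0, hb1]; ring
  have hb'' : a0*b1 - a1*b0 = q*(a0*c1 - a1*c0) := by rw [hb0, hb1]; ring
  clear E1 E2 E3 E4 E5 E6 F1 F2 W0 W1 W0' W1' hKQ hk0 hk1 hb0 hb1 hQb
  have hpar : k1*w0 - k0*w1 = 0 := by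
    rcases mul_eq_zero.mp hX with h' | h'
    · linarith
    · exact h'
  have hw0K : w0 * (k0^2+k1^2) = (w0*k0 + w1*k1) * k0 := by linear_combination k1 * hpar
  have hw1K : w1 * (k0^2+k1^2) = (w0*k0 + w1*k1) * k1 := by linear_combination (-k0) * hpar
  have hM : w0*k0 + w1*k1 ≠ 0 := by
    intro h0
    rw [h0, zero_mul] at hw0K hw1K
    have hw00 : w0 = 0 := by
      rcases mul_eq_zero.mp hw0K with h' | h'
      · exact h'
      · linarith
    have hw10 : w1 = 0 := by
      rcases mul_eq_zero.mp hw1K with h' | h'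
      · exact h'
      · linarith
    rw [hw00, hw10] at hQw
    norm_num at hQw
  have hgK : (a0*w1 - a1*w0) * (k0^2 + k1^2)
      = (w0*k0 + w1*k1) * ((a0^2+a1^2) * (p*(a0*c1 - a1*c0))) := by
    linear_combination a0 * hw1K - a1 * hw0K + (w0*k0 + w1*k1) * hak
      + ((w0*k0 + w1*k1) * (a0^2+a1^2)) * hb'
  have hhK : (w0*c1 - w1*c0) * (k0^2 + k1^2)
      = (w0*k0 + w1*k1) * ((c0^2+c1^2) * (q*(a0*c1 - a1*c0))) := by
    linear_combination c1 * hw0K - c0 * hw1K + (w0*k0 + w1*k1) * hck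
      + ((w0*k0 + w1*k1) * (c0^2+c1^2)) * hb''
  have hM2 : 0 < (w0*k0 + w1*k1)^2 := by rw [sq]; exact mul_self_pos.mpr hM
  have hΔ2 : 0 < (a0*c1 - a1*c0)^2 := by rw [sq]; exact mul_self_pos.mpr hΔ
  have hprod : ((a0*w1 - a1*w0) * (w0*c1 - w1*c0)) * ((k0^2+k1^2)*(k0^2+k1^2))
      = ((w0*k0 + w1*k1)^2) * ((a0*c1 - a1*c0)^2)
        * ((a0^2+a1^2) * (c0^2+c1^2) * (p*q)) := by
    linear_combination ((w0*c1 - w1*c0) * (k0^2+k1^2)) * hgK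
      + ((w0*k0 + w1*k1) * ((a0^2+a1^2) * (p*(a0*c1 - a1*c0)))) * hhK
  have hRpos : 0 < ((w0*k0 + w1*k1)^2) * ((a0*c1 - a1*c0)^2)
      * ((a0^2+a1^2) * (c0^2+c1^2) * (p*q)) :=
    mul_pos (mul_pos hM2 hΔ2) (mul_pos (mul_pos hQa hQc) (mul_pos hp hq))
  have hgh : 0 < (a0*w1 - a1*w0) * (w0*c1 - w1*c0) := by
    have h9 : 0 < ((a0*w1 - a1*w0) * (w0*c1 - w1*c0)) * ((k0^2+k1^2)*(k0^2+k1^2)) := by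
      rw [hprod]; exact hRpos
    rcases mul_pos_iff.mp h9 with ⟨hx, _⟩ | ⟨_, hy⟩
    · exact hx
    · exact absurd (mul_pos hKpos hKpos) (by linarith)
  have hsame : (0 < a0*w1 - a1*w0 ∧ 0 < w0*c1 - w1*c0)
      ∨ (a0*w1 - a1*w0 < 0 ∧ w0*c1 - w1*c0 < 0) := mul_pos_iff.mp hgh
  have hS : (a0*w1 - a1*w0) + (w0*c1 - w1*c0) ≠ 0 := by
    rcases hsame with ⟨h1', h2'⟩ | ⟨h1', h2'⟩ <;> intro h0 <;> linarith
  refine ⟨(a0*c1 - a1*c0)/((a0*w1 - a1*w0) + (w0*c1 - w1*c0)),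
    (w0*c1 - w1*c0)/((a0*w1 - a1*w0) + (w0*c1 - w1*c0)),
    (a0*w1 - a1*w0)/((a0*w1 - a1*w0) + (w0*c1 - w1*c0)), ?_, ?_, ?_, ?_, ?_⟩
  · rcases hsame with ⟨h1', h2'⟩ | ⟨h1', h2'⟩
    · exact div_pos h2' (by linarith)
    · exact div_pos_of_neg_of_neg h2' (by linarith)
  · rcases hsame with ⟨h1', h2'⟩ | ⟨h1', h2'⟩
    · exact div_pos h1' (by linarith)
    · exact div_pos_of_neg_of_neg h1' (by linarith)
  · rw [← add_div, div_eq_one_iff_eq hS]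
    ring
  · field_simp
    ring
  · field_simp
    ring

lemma coordQ_pos {P O : EuclideanSpace ℝ (Fin 2)} (h : P ≠ O) :
    0 < (P 0 - O 0)^2 + (P 1 - O 1)^2 := by
  by_contra hle
  push_neg at hle
  have h0 : P 0 - O 0 = 0 := by nlinarith [sq_nonneg (P 0 - O 0), sq_nonneg (P 1 - O 1)]
  have h1 : P 1 - O 1 = 0 := by nlinarith [sq_nonneg (P 0 - O 0), sq_nonneg (P 1 - O 1)]
  apply h
  have h2 : ∀ i : Fin 2, P i = O i := by
    rw [Fin.forall_fin_two]
    constructor <;> linarith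
  ext i
  exact h2 i

lemma det_ne_zero_of_not_collinear {O A C : EuclideanSpace ℝ (Fin 2)}
    (h : ¬ Collinear ℝ ({O, A, C} : Set (EuclideanSpace ℝ (Fin 2)))) :
    (A 0 - O 0) * (C 1 - O 1) - (A 1 - O 1) * (C 0 - O 0) ≠ 0 := by
  intro h0
  apply h
  by_cases hAO : A = O
  · refine Collinear.subset ?_ (collinear_pair ℝ O C)
    rw [hAO]
    intro x hx
    simp only [Set.mem_insert_iff, Set.mem_singleton_iff] at hx ⊢
    tauto
  · have hdep : ∃ μ : ℝ, ∀ j : Fin 2, C j = μ * (A j - O j) + O j := by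
      by_cases ha0 : A 0 - O 0 = 0
      · have ha1 : A 1 - O 1 ≠ 0 := by
          intro ha1
          apply hAO
          have h2 : ∀ i : Fin 2, A i = O i := by
            rw [Fin.forall_fin_two]
            constructor <;> linarith
          ext i
          exact h2 i
        have hC0 : C 0 - O 0 = 0 := by
          have h2 : (A 1 - O 1) * (C 0 - O 0) = 0 := by
            linear_combination -h0 + (C 1 - O 1) * ha0
          rcases mul_eq_zero.mp h2 with h' | h'
          · exact absurd h' ha1
          · exact h'
        refine ⟨(C 1 - O 1)/(A 1 - O 1), ?_⟩
        rw [Fin.forall_fin_two]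
        constructor
        · rw [ha0, mul_zero, zero_add]
          linarith
        · field_simp
          ring
      · refine ⟨(C 0 - O 0)/(A 0 - O 0), ?_⟩
        rw [Fin.forall_fin_two]
        constructor
        · field_simp
          ring
        · field_simp
          linear_combination h0
    obtain ⟨μ, hμ⟩ := hdep
    have hCeq : AffineMap.lineMap O A μ = C := by
      rw [AffineMap.lineMap_apply, vsub_eq_sub, vadd_eq_add]
      ext i
      rw [show (μ • (A - O) + O) i = μ * (A i - O i) + O i by
        simp [PiLp.add_apply, PiLp.smul_apply, PiLp.sub_apply]]
      exact (hμ i).symm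
    have hmem : C ∈ affineSpan ℝ ({O, A} : Set (EuclideanSpace ℝ (Fin 2))) := by
      have hl := AffineMap.lineMap_mem_affineSpan_pair μ O A
      rwa [hCeq] at hl
    refine Collinear.subset ?_ (collinear_insert_of_mem_affineSpan_pair hmem)
    intro x hx
    simp only [Set.mem_insert_iff, Set.mem_singleton_iff] at hx ⊢
    tauto

/-- If the ray `OB` lies strictly between the rays `OA` and `OC`, then the line
`d` in which the composition of the reflections in the lines `OA`, `OB`, `OC`
is a reflection contains a point in the interior of the angle `∠AOC`. -/
theorem three_reflections_interior_line
    (O A B C D₀ : EuclideanSpace ℝ (Fin 2))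
    (h : ¬ Collinear ℝ ({O, A, C} : Set (EuclideanSpace ℝ (Fin 2))))
    (hB : B ≠ O)
    (hBint : ∃ X ∈ openSegment ℝ A C, SameRay ℝ (X - O) (B - O))
    (hD₀ : D₀ ≠ O)
    (hd : (lineReflection O C).toAffineMap.comp
        ((lineReflection O B).toAffineMap.comp (lineReflection O A).toAffineMap)
      = (lineReflection O D₀).toAffineMap) :
    ∃ D ∈ affineSpan ℝ ({O, D₀} : Set (EuclideanSpace ℝ (Fin 2))),
      D ∈ openSegment ℝ A C := by
  have hA : A ≠ O := by
    rintro rfl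
    apply h
    refine Collinear.subset ?_ (collinear_pair ℝ A C)
    intro x hx
    simp only [Set.mem_insert_iff, Set.mem_singleton_iff] at hx ⊢
    tauto
  have hC : C ≠ O := by
    rintro rfl
    apply h
    refine Collinear.subset ?_ (collinear_pair ℝ C A)
    intro x hx
    simp only [Set.mem_insert_iff, Set.mem_singleton_iff] at hx ⊢
    tauto
  have hΔ := det_ne_zero_of_not_collinear h
  have hfix : lineReflection O C (lineReflection O B (lineReflection O A D₀)) = D₀ := by
    have h1 := congrArg (fun f => f D₀) hd
    simp only [AffineMap.comp_apply] at h1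
    have hself : lineReflection O D₀ D₀ = D₀ := by
      haveI : Nonempty (affineSpan ℝ ({O, D₀} : Set (EuclideanSpace ℝ (Fin 2)))) :=
        ⟨⟨O, subset_affineSpan ℝ _ (by simp)⟩⟩
      show EuclideanGeometry.reflection
        (affineSpan ℝ ({O, D₀} : Set (EuclideanSpace ℝ (Fin 2)))) D₀ = D₀
      rw [EuclideanGeometry.reflection_eq_self_iff]
      exact subset_affineSpan ℝ _ (by simp)
    exact h1.trans hself
  obtain ⟨X, hX, hray⟩ := hBint
  obtain ⟨α', β', hα', hβ', hsum', hXeq⟩ := hX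
  have hXO : X ≠ O := by
    intro h0
    apply h
    have hOeq : AffineMap.lineMap A C β' = O := by
      rw [AffineMap.lineMap_apply, vsub_eq_sub, vadd_eq_add]
      rw [← h0, ← hXeq]
      have hα'' : α' = 1 - β' := by linarith
      rw [hα'']
      module
    have hmem : O ∈ affineSpan ℝ ({A, C} : Set (EuclideanSpace ℝ (Fin 2))) := by
      have hl := AffineMap.lineMap_mem_affineSpan_pair β' A C
      rwa [hOeq] at hl
    exact collinear_insert_of_mem_affineSpan_pair hmem
  obtain ⟨r, hr, hrBeq⟩ := hray.exists_pos_left (sub_ne_zero.mpr hXO) (sub_ne_zero.mpr hB)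
  have hb0 : B 0 - O 0 = (r * α') * (A 0 - O 0) + (r * β') * (C 0 - O 0) := by
    have h1 := congrArg (fun v => v 0) hrBeq
    simp only [PiLp.smul_apply, PiLp.sub_apply, smul_eq_mul] at h1
    have h2 := congrArg (fun v => v 0) hXeq
    simp only [PiLp.add_apply, PiLp.smul_apply, smul_eq_mul] at h2
    linear_combination -h1 - r * h2 + (r * O 0) * hsum'
  have hb1 : B 1 - O 1 = (r * α') * (A 1 - O 1) + (r * β') * (C 1 - O 1) := by
    have h1 := congrArg (fun v => v 1) hrBeq
    simp only [PiLp.smul_apply, PiLp.sub_apply, smul_eq_mul] at h1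
    have h2 := congrArg (fun v => v 1) hXeq
    simp only [PiLp.add_apply, PiLp.smul_apply, smul_eq_mul] at h2
    linear_combination -h1 - r * h2 + (r * O 1) * hsum'
  have hQa := coordQ_pos hA
  have hQb := coordQ_pos hB
  have hQc := coordQ_pos hC
  have hQw := coordQ_pos hD₀
  have E1 := lineReflection_coord O A D₀ hA 0
  have E2 := lineReflection_coord O A D₀ hA 1
  have E3 := lineReflection_coord O B (lineReflection O A D₀) hB 0
  have E4 := lineReflection_coord O B (lineReflection O A D₀) hB 1
  have E5 := lineReflection_coord O C (lineReflection O B (lineReflection O A D₀)) hC 0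
  have E6 := lineReflection_coord O C (lineReflection O B (lineReflection O A D₀)) hC 1
  rw [hfix] at E5 E6
  obtain ⟨s, α, β, hα, hβ, hαβ, h0, h1⟩ :=
    main_algebra (A 0 - O 0) (A 1 - O 1) (B 0 - O 0) (B 1 - O 1) (C 0 - O 0) (C 1 - O 1)
      (D₀ 0 - O 0) (D₀ 1 - O 1)
      (lineReflection O A D₀ 0 - O 0) (lineReflection O A D₀ 1 - O 1)
      (lineReflection O B (lineReflection O A D₀) 0 - O 0)
      (lineReflection O B (lineReflection O A D₀) 1 - O 1)
      (r * α') (r * β') (mul_pos hr hα') (mul_pos hr hβ') hb0 hb1 hQa hQb hQc hQw hΔ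
      E1 E2 E3 E4 E5 E6
  refine ⟨α • A + β • C, ?_, α, β, hα, hβ, hαβ, rfl⟩
  have hDeq : α • A + β • C = AffineMap.lineMap O D₀ s := by
    rw [AffineMap.lineMap_apply, vsub_eq_sub, vadd_eq_add]
    ext i
    have happ : (α • A + β • C) i = α * A i + β * C i := by
      simp [PiLp.add_apply, PiLp.smul_apply]
    have happ2 : (s • (D₀ - O) + O) i = s * (D₀ i - O i) + O i := by
      simp [PiLp.add_apply, PiLp.smul_apply, PiLp.sub_apply]
    rw [happ, happ2]
    have h3 : ∀ j : Fin 2, α * A j + β * C j = s * (D₀ j - O j) + O j := by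
      rw [Fin.forall_fin_two]
      constructor
      · linear_combination h0 + (O 0) * hαβ
      · linear_combination h1 + (O 1) * hαβ
    exact h3 i
  rw [hDeq]
  exact AffineMap.lineMap_mem_affineSpan_pair s O D₀
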